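/- Let $(\Omega,\mu)$ be a standard probability space, $L$ ergodic measure-preserving, and $f:\Omega\to\mathbf{R}$ measurable with $\log^+|f|\in L^1$. Then $\lim_{n\to\infty} \frac{1}{n}\log(1+|S_n|) = 0$ almost surely, where $S_n=\sum_{k=0}^{n-1} f\circ L^k$. -/

import Mathlib

open MeasureTheory Filter Topology Set

private lemma fold_max_div_tendsto (b : ℕ → ℝ) (hb : ∀ n, 0 ≤ b n)
    (h : Tendsto (fun n : ℕ => b n / n) atTop (𝓝 0)) :
    Tendsto (fun n : ℕ => ((Finset.range n).fold max 0 b) / n) atTop (𝓝 0) := by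
  rw [Metric.tendsto_atTop] at h ⊢
  intro ε hε
  obtain ⟨N, hN⟩ := h (ε / 2) (by positivity)
  set C : ℝ := (Finset.range (N + 1)).fold max 0 b with hC
  obtain ⟨K, hK⟩ := exists_nat_gt (C / (ε / 2))
  refine ⟨max (N + 1) (K + 1), fun n hn => ?_⟩
  have hn1 : N + 1 ≤ n := le_trans (le_max_left _ _) hn
  have hn2 : K + 1 ≤ n := le_trans (le_max_right _ _) hn
  have hnpos : (0 : ℝ) < n := by
    have : 1 ≤ n := by omega
    exact_mod_cast Nat.lt_of_lt_of_le Nat.zero_lt_one this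
  have hCn : C ≤ ε / 2 * n := by
    have hKn : (K : ℝ) ≤ n := by exact_mod_cast (by omega : K ≤ n)
    have : C < ε / 2 * K := by
      rw [div_lt_iff₀ (by positivity)] at hK
      linarith [hK]
    nlinarith
  have hfold : (Finset.range n).fold max 0 b ≤ ε / 2 * n := by
    rw [Finset.fold_max_le]
    refine ⟨by positivity, fun k hk => ?_⟩
    rcases lt_or_ge k (N + 1) with hkN | hkN
    · refine le_trans ?_ hCn
      rw [hC]
      exact (Finset.le_fold_max _).2 (Or.inr ⟨k, Finset.mem_range.2 hkN, le_rfl⟩)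
    · have hk1 : 1 ≤ k := by omega
      have hkpos : (0 : ℝ) < k := by exact_mod_cast hk1
      have h1 := hN k (by omega)
      rw [Real.dist_eq, sub_zero, abs_of_nonneg (div_nonneg (hb k) hkpos.le)] at h1
      have h2 : b k < ε / 2 * k := by
        rw [div_lt_iff₀ hkpos] at h1; linarith
      have hkn : (k : ℝ) ≤ n := by exact_mod_cast (Finset.mem_range.1 hk).le
      nlinarith
  have hfold0 : (0 : ℝ) ≤ (Finset.range n).fold max 0 b :=
    (Finset.le_fold_max _).2 (Or.inl le_rfl)
  rw [Real.dist_eq, sub_zero, abs_of_nonneg (by positivity)]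
  calc (Finset.range n).fold max 0 b / n ≤ (ε / 2 * n) / n := by gcongr
    _ = ε / 2 := by rw [mul_div_assoc, div_self hnpos.ne', mul_one]
    _ < ε := by linarith

theorem log_one_add_birkhoff
    {Ω : Type*} [MeasurableSpace Ω] [StandardBorelSpace Ω]
    (μ : Measure Ω) [IsProbabilityMeasure μ]
    (L : Ω → Ω) (hL : Ergodic L μ)
    (f : Ω → ℝ) (hf : Measurable f)
    (hint : Integrable (fun ω => max (Real.log |f ω|) 0) μ) :
    ∀ᵐ ω ∂μ, Tendsto
      (fun n : ℕ => Real.log (1 + |∑ k ∈ Finset.range n, f (L^[k] ω)|) / n)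
      atTop (𝓝 0) := by
  set g : Ω → ℝ := fun ω => Real.log (1 + |f ω|) with hgdef
  have hg0 : ∀ ω, 0 ≤ g ω := fun ω => Real.log_nonneg (by linarith [abs_nonneg (f ω)])
  have hgm : Measurable g := (measurable_const.add hf.abs).log
  have hgi : Integrable g μ := by
    refine ((integrable_const (Real.log 2)).add hint).mono' hgm.aestronglyMeasurable ?_
    filter_upwards with ω
    rw [Real.norm_eq_abs, abs_of_nonneg (hg0 ω)]
    simp only [Pi.add_apply]
    rcases le_total (|f ω|) 1 with h1 | h1
    · have h2 : g ω ≤ Real.log 2 := Real.log_le_log (by positivity) (by linarith)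
      have : (0:ℝ) ≤ max (Real.log |f ω|) 0 := le_max_right _ _
      linarith
    · have h2 : g ω ≤ Real.log (2 * |f ω|) :=
        Real.log_le_log (by positivity) (by linarith)
      rw [Real.log_mul two_ne_zero (by linarith)] at h2
      have : Real.log |f ω| ≤ max (Real.log |f ω|) 0 := le_max_left _ _
      linarith
  -- key: a.e., g(L^[n] ω)/n → 0
  have key : ∀ᵐ ω ∂μ, Tendsto (fun n : ℕ => g (L^[n] ω) / n) atTop (𝓝 0) := by
    have H : ∀ m : ℕ, ∀ᵐ ω ∂μ,
        ∀ᶠ n : ℕ in atTop, ¬ ((m + 1 : ℝ) * g (L^[n] ω) ∈ Set.Ioi (n : ℝ)) := by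
      intro m
      set X : Ω → ℝ := fun ω => (m + 1 : ℝ) * g ω with hXdef
      have hXi : Integrable X μ := hgi.const_mul _
      have hsum : (∑' j : ℕ, μ {ω | X ω ∈ Set.Ioi (j : ℝ)}) < ⊤ := by
        letI : MeasureSpace Ω := ⟨μ⟩
        exact ProbabilityTheory.tsum_prob_mem_Ioi_lt_top hXi
          (fun ω => mul_nonneg (by positivity) (hg0 ω))
      have heq : ∀ n : ℕ,
          μ {ω | X (L^[n] ω) ∈ Set.Ioi (n : ℝ)} = μ {ω | X ω ∈ Set.Ioi (n : ℝ)} := by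
        intro n
        have hs : MeasurableSet {ω | X ω ∈ Set.Ioi (n : ℝ)} :=
          (measurable_const.mul hgm) measurableSet_Ioi
        exact (hL.toMeasurePreserving.iterate n).measure_preimage hs.nullMeasurableSet
      have h0 := measure_setOf_frequently_eq_zero
        (μ := μ) (p := fun n ω => X (L^[n] ω) ∈ Set.Ioi (n : ℝ))
        (by rw [tsum_congr heq]; exact hsum.ne)
      have h1 : ∀ᵐ ω ∂μ, ¬ ∃ᶠ n : ℕ in atTop, X (L^[n] ω) ∈ Set.Ioi (n : ℝ) := by
        rw [ae_iff]
        convert h0 using 2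
        ext x
        simp [frequently_atTop, Set.mem_Ioi]
      filter_upwards [h1] with ω hω
      simpa [Filter.not_frequently] using hω
    filter_upwards [ae_all_iff.2 H] with ω hω
    rw [Metric.tendsto_atTop]
    intro ε hε
    obtain ⟨m, hm⟩ := exists_nat_gt (1 / ε)
    obtain ⟨N, hN⟩ := (hω m).exists_forall_of_atTop
    refine ⟨max N 1, fun n hn => ?_⟩
    have hn1 : 1 ≤ n := le_trans (le_max_right _ _) hn
    have hnpos : (0 : ℝ) < n := by exact_mod_cast hn1
    have h2 := hN n (le_trans (le_max_left _ _) hn)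
    simp only [Set.mem_Ioi, not_lt] at h2
    have hmp : (0:ℝ) < (m : ℝ) + 1 := by positivity
    have h3 : g (L^[n] ω) / n ≤ 1 / (m + 1) := by
      rw [div_le_div_iff₀ hnpos hmp]
      nlinarith [hg0 (L^[n] ω)]
    have h4 : 1 / ((m : ℝ) + 1) < ε := by
      rw [div_lt_iff₀ hmp]
      rw [div_lt_iff₀ hε] at hm
      nlinarith
    rw [Real.dist_eq, sub_zero, abs_of_nonneg (div_nonneg (hg0 _) hnpos.le)]
    linarith
  filter_upwards [key] with ω hω
  set b : ℕ → ℝ := fun k => g (L^[k] ω) with hbdef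
  have hb0 : ∀ k, 0 ≤ b k := fun k => hg0 _
  have hlim : Tendsto (fun n : ℕ =>
      Real.log n / n + ((Finset.range n).fold max 0 b) / n) atTop (𝓝 0) := by
    have t1 : Tendsto (fun n : ℕ => Real.log n / n) atTop (𝓝 0) :=
      (Real.isLittleO_log_id_atTop.tendsto_div_nhds_zero).comp
        tendsto_natCast_atTop_atTop
    simpa using t1.add (fold_max_div_tendsto b hb0 hω)
  refine squeeze_zero' ?_ ?_ hlim
  · filter_upwards with n
    have : (1:ℝ) ≤ 1 + |∑ k ∈ Finset.range n, f (L^[k] ω)| := by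
      linarith [abs_nonneg (∑ k ∈ Finset.range n, f (L^[k] ω))]
    have := Real.log_nonneg this
    positivity
  · rw [eventually_atTop]
    refine ⟨1, fun n hn => ?_⟩
    have hnpos : (0 : ℝ) < n := by exact_mod_cast hn
    set a : ℕ → ℝ := fun k => |f (L^[k] ω)| with hadef
    set A : ℝ := (Finset.range n).fold max 0 a with hA
    set B : ℝ := (Finset.range n).fold max 0 b with hB
    have hA0 : (0:ℝ) ≤ A := (Finset.le_fold_max _).2 (Or.inl le_rfl)
    have hB0 : (0:ℝ) ≤ B := (Finset.le_fold_max _).2 (Or.inl le_rfl)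
    have hS : |∑ k ∈ Finset.range n, f (L^[k] ω)| ≤ ∑ k ∈ Finset.range n, a k :=
      Finset.abs_sum_le_sum_abs _ _
    have hsum_le : ∑ k ∈ Finset.range n, a k ≤ n * A := by
      calc ∑ k ∈ Finset.range n, a k ≤ ∑ _k ∈ Finset.range n, A :=
            Finset.sum_le_sum fun k hk =>
              (Finset.le_fold_max _).2 (Or.inr ⟨k, hk, le_rfl⟩)
        _ = n * A := by simp [mul_comm]
    have step1 : Real.log (1 + |∑ k ∈ Finset.range n, f (L^[k] ω)|)
        ≤ Real.log ((n : ℝ) * (1 + A)) := by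
      apply Real.log_le_log (by positivity)
      have hn1 : (1:ℝ) ≤ n := by exact_mod_cast hn
      nlinarith [hS, hsum_le, hA0]
    have step2 : Real.log ((n : ℝ) * (1 + A)) = Real.log n + Real.log (1 + A) :=
      Real.log_mul (by positivity) (by positivity)
    have step3 : Real.log (1 + A) ≤ B := by
      rw [Real.log_le_iff_le_exp (by positivity)]
      have : A ≤ Real.exp B - 1 := by
        rw [hA, Finset.fold_max_le]
        refine ⟨by nlinarith [Real.one_le_exp hB0], fun k hk => ?_⟩
        have hbk : b k ≤ B := (Finset.le_fold_max _).2 (Or.inr ⟨k, hk, le_rfl⟩)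
        have : 1 + a k = Real.exp (b k) := by
          have h5 : (0:ℝ) < 1 + |f (L^[k] ω)| := by positivity
          simp only [hadef, hbdef, hgdef]
          rw [Real.exp_log h5]
        nlinarith [Real.exp_le_exp.2 hbk]
      linarith
    have hfin : Real.log (1 + |∑ k ∈ Finset.range n, f (L^[k] ω)|)
        ≤ Real.log n + B := by
      calc Real.log (1 + |∑ k ∈ Finset.range n, f (L^[k] ω)|)
          ≤ Real.log ((n : ℝ) * (1 + A)) := step1
        _ = Real.log n + Real.log (1 + A) := step2
        _ ≤ Real.log n + B := by linarith
    calc Real.log (1 + |∑ k ∈ Finset.range n, f (L^[k] ω)|) / n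
        ≤ (Real.log n + B) / n := (div_le_div_iff_of_pos_right hnpos).2 hfin
      _ = Real.log n / n + B / n := add_div _ _ _
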